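/- For integers 0 ≤ t < n and d ≥ 1, define A_d(t, n) = Σ_{t+1 ≤ i_1 < i_2 < ⋯ < i_d ≤ n} 1/(i_1 i_2 ⋯ i_d). Then for every d ≥ 1 there exists a constant C > 0, depending only on d, such that for all integers 1 ≤ t < n, |A_d(t, n) − (1/d!)·(ln(n/t))^d| ≤ C · (ln(n/t))^{d−1} / t. -/

import Mathlib

/-- `A_d(t,n) = Σ_{t+1 ≤ i₁ < i₂ < ⋯ < i_d ≤ n} 1/(i₁ i₂ ⋯ i_d)`, the sum over all
`d`-element subsets of `{t+1, …, n}` of the reciprocal of the product. -/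
noncomputable def Aseq (d t n : ℕ) : ℝ :=
  ∑ A ∈ (Finset.Icc (t + 1) n).powersetCard d, ∏ i ∈ A, 1 / (i : ℝ)

noncomputable def Rerr (d t n : ℕ) : ℝ :=
  ∑ A ∈ (Finset.Icc (t + 1) n).powersetCard d, (∏ i ∈ A, 1 / (i : ℝ)) * ∑ i ∈ A, 1 / (i : ℝ)

noncomputable def Sh (t n : ℕ) : ℝ := ∑ i ∈ Finset.Icc (t + 1) n, 1 / (i : ℝ)

lemma key_identity (I : Finset ℕ) (f : ℕ → ℝ) (d : ℕ) :
    (∑ i ∈ I, f i) * ∑ A ∈ I.powersetCard d, ∏ j ∈ A, f j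
      = ((d : ℝ) + 1) * ∑ B ∈ I.powersetCard (d + 1), ∏ j ∈ B, f j
        + ∑ A ∈ I.powersetCard d, (∏ j ∈ A, f j) * ∑ i ∈ A, f i := by
  rw [mul_comm, Finset.sum_mul]
  have hsplit : ∀ A ∈ I.powersetCard d,
      (∏ j ∈ A, f j) * ∑ i ∈ I, f i
        = (∑ i ∈ I \ A, ∏ j ∈ insert i A, f j) + (∏ j ∈ A, f j) * ∑ i ∈ A, f i := by
    intro A hA
    have hsub : A ⊆ I := (Finset.mem_powersetCard.1 hA).1
    rw [← Finset.sum_sdiff hsub, mul_add]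
    congr 1
    rw [Finset.mul_sum]
    refine Finset.sum_congr rfl fun i hi => ?_
    rw [Finset.prod_insert (Finset.mem_sdiff.1 hi).2, mul_comm]
  rw [Finset.sum_congr rfl hsplit, Finset.sum_add_distrib]
  congr 1
  have hre : ∑ A ∈ I.powersetCard d, ∑ i ∈ I \ A, ∏ j ∈ insert i A, f j
      = ∑ B ∈ I.powersetCard (d + 1), ∑ i ∈ B, ∏ j ∈ B, f j := by
    rw [Finset.sum_sigma', Finset.sum_sigma']
    refine Finset.sum_nbij' (fun p => ⟨insert p.2 p.1, p.2⟩) (fun p => ⟨p.1.erase p.2, p.2⟩)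
      ?_ ?_ ?_ ?_ ?_
    · rintro ⟨A, i⟩ hp
      simp only [Finset.mem_sigma, Finset.mem_powersetCard, Finset.mem_sdiff] at hp ⊢
      obtain ⟨⟨hAI, hcard⟩, hiI, hiA⟩ := hp
      exact ⟨⟨Finset.insert_subset hiI hAI,
        by rw [Finset.card_insert_of_notMem hiA, hcard]⟩, Finset.mem_insert_self _ _⟩
    · rintro ⟨B, i⟩ hp
      simp only [Finset.mem_sigma, Finset.mem_powersetCard, Finset.mem_sdiff] at hp ⊢
      obtain ⟨⟨hBI, hcard⟩, hiB⟩ := hp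
      refine ⟨⟨(Finset.erase_subset _ _).trans hBI, ?_⟩, hBI hiB, Finset.notMem_erase _ _⟩
      rw [Finset.card_erase_of_mem hiB, hcard]
      rfl
    · rintro ⟨A, i⟩ hp
      simp only [Finset.mem_sigma, Finset.mem_sdiff] at hp
      simp [Finset.erase_insert hp.2.2]
    · rintro ⟨B, i⟩ hp
      simp only [Finset.mem_sigma] at hp
      simp [Finset.insert_erase hp.2]
    · rintro ⟨A, i⟩ _; rfl
  rw [hre, Finset.mul_sum]
  refine Finset.sum_congr rfl fun B hB => ?_
  rw [Finset.sum_const, (Finset.mem_powersetCard.1 hB).2, nsmul_eq_mul]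
  push_cast
  ring

lemma key_rec (d t n : ℕ) :
    Sh t n * Aseq d t n = ((d : ℝ) + 1) * Aseq (d + 1) t n + Rerr d t n :=
  key_identity (Finset.Icc (t + 1) n) (fun i => 1 / (i : ℝ)) d

lemma telescope (t n : ℕ) (htn : t ≤ n) :
    ∑ i ∈ Finset.Ico t n, (Real.log ((i : ℝ) + 1) - Real.log (i : ℝ))
      = Real.log (n : ℝ) - Real.log (t : ℝ) := by
  rw [Finset.sum_Ico_eq_sum_range]
  have h := Finset.sum_range_sub (fun k => Real.log ((t + k : ℕ) : ℝ)) (n - t)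
  have h2 : ∀ k, Real.log (((t + k : ℕ) : ℝ) + 1) - Real.log ((t + k : ℕ) : ℝ)
      = (fun k => Real.log ((t + k : ℕ) : ℝ)) (k + 1) - (fun k => Real.log ((t + k : ℕ) : ℝ)) k := by
    intro k; simp only []; congr 2; push_cast; ring
  calc ∑ k ∈ Finset.range (n - t), (Real.log (((t + k : ℕ) : ℝ) + 1) - Real.log ((t + k : ℕ) : ℝ))
      = ∑ k ∈ Finset.range (n - t),
          ((fun k => Real.log ((t + k : ℕ) : ℝ)) (k + 1) - (fun k => Real.log ((t + k : ℕ) : ℝ)) k) :=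
        Finset.sum_congr rfl fun k _ => h2 k
    _ = Real.log ((t + (n - t) : ℕ) : ℝ) - Real.log ((t + 0 : ℕ) : ℝ) := h
    _ = Real.log (n : ℝ) - Real.log (t : ℝ) := by
        rw [Nat.add_sub_cancel' htn, Nat.add_zero]

lemma log_step_le (i : ℕ) (hi : 1 ≤ i) :
    Real.log ((i : ℝ) + 1) - Real.log (i : ℝ) ≤ 1 / (i : ℝ) := by
  have hi0 : (0 : ℝ) < i := by exact_mod_cast hi
  have h := Real.log_le_sub_one_of_pos (x := ((i : ℝ) + 1) / i) (by positivity)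
  rw [Real.log_div (by positivity) (ne_of_gt hi0)] at h
  have : ((i : ℝ) + 1) / i - 1 = 1 / i := by field_simp; ring
  linarith

lemma log_step_ge (i : ℕ) (hi : 1 ≤ i) :
    1 / ((i : ℝ) + 1) ≤ Real.log ((i : ℝ) + 1) - Real.log (i : ℝ) := by
  have hi0 : (0 : ℝ) < i := by exact_mod_cast hi
  have h := Real.log_le_sub_one_of_pos (x := (i : ℝ) / (i + 1)) (by positivity)
  rw [Real.log_div (ne_of_gt hi0) (by positivity)] at h
  have : (i : ℝ) / (i + 1) - 1 = -(1 / (i + 1)) := by field_simp; ring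
  linarith

lemma Sh_eq (t n : ℕ) : Sh t n = ∑ i ∈ Finset.Ico t n, 1 / ((i : ℝ) + 1) := by
  rw [Sh, ← Finset.Ico_add_one_right_eq_Icc, Finset.sum_Ico_eq_sum_range, Finset.sum_Ico_eq_sum_range]
  have hnt : n + 1 - (t + 1) = n - t := by omega
  rw [hnt]
  refine Finset.sum_congr rfl fun k _ => ?_
  push_cast
  ring_nf

lemma Sh_le_log (t n : ℕ) (ht : 1 ≤ t) (htn : t ≤ n) :
    Sh t n ≤ Real.log (n : ℝ) - Real.log (t : ℝ) := by
  rw [Sh_eq, ← telescope t n htn]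
  refine Finset.sum_le_sum fun i hi => ?_
  exact log_step_ge i (le_trans ht (Finset.mem_Ico.1 hi).1)

lemma log_le_Sh (t n : ℕ) (ht : 1 ≤ t) (htn : t < n) :
    Real.log (n : ℝ) - Real.log (t : ℝ) ≤ Sh t n + 1 / (t : ℝ) := by
  rw [← telescope t n htn.le]
  have h1 : ∑ i ∈ Finset.Ico t n, (Real.log ((i : ℝ) + 1) - Real.log (i : ℝ))
      ≤ ∑ i ∈ Finset.Ico t n, 1 / (i : ℝ) :=
    Finset.sum_le_sum fun i hi => log_step_le i (le_trans ht (Finset.mem_Ico.1 hi).1)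
  have h2 : ∑ i ∈ Finset.Ico t n, 1 / (i : ℝ)
      = 1 / (t : ℝ) + ∑ i ∈ Finset.Ico (t + 1) n, 1 / (i : ℝ) :=
    Finset.sum_eq_sum_Ico_succ_bot htn _
  have h3 : ∑ i ∈ Finset.Ico (t + 1) n, 1 / (i : ℝ) ≤ Sh t n := by
    rw [Sh]
    refine Finset.sum_le_sum_of_subset_of_nonneg ?_ (fun i _ _ => by positivity)
    intro i hi
    simp only [Finset.mem_Ico, Finset.mem_Icc] at hi ⊢
    omega
  linarith

lemma Aseq_zero (t n : ℕ) : Aseq 0 t n = 1 := by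
  simp [Aseq]

lemma Aseq_one (t n : ℕ) : Aseq 1 t n = Sh t n := by
  rw [Aseq, Finset.powersetCard_one, Finset.sum_map, Sh]
  simp

lemma Aseq_nonneg (d t n : ℕ) : 0 ≤ Aseq d t n :=
  Finset.sum_nonneg fun A _ => Finset.prod_nonneg fun i _ => by positivity

lemma Rerr_nonneg (d t n : ℕ) : 0 ≤ Rerr d t n :=
  Finset.sum_nonneg fun A _ =>
    mul_nonneg (Finset.prod_nonneg fun i _ => by positivity)
      (Finset.sum_nonneg fun i _ => by positivity)

lemma Rerr_le (d t n : ℕ) (ht : 1 ≤ t) :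
    Rerr d t n ≤ ((d : ℝ) / t) * Aseq d t n := by
  have ht0 : (0 : ℝ) < t := by exact_mod_cast ht
  rw [Rerr, Aseq, Finset.mul_sum]
  refine Finset.sum_le_sum fun A hA => ?_
  obtain ⟨hAI, hcard⟩ := Finset.mem_powersetCard.1 hA
  have hsum : ∑ i ∈ A, 1 / (i : ℝ) ≤ (d : ℝ) / t := by
    calc ∑ i ∈ A, 1 / (i : ℝ) ≤ ∑ _i ∈ A, 1 / (t : ℝ) := by
          refine Finset.sum_le_sum fun i hi => ?_
          have h : t + 1 ≤ i := (Finset.mem_Icc.1 (hAI hi)).1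
          have hti : (t : ℝ) ≤ i := by exact_mod_cast (by omega : t ≤ i)
          exact one_div_le_one_div_of_le ht0 hti
      _ = (d : ℝ) / t := by rw [Finset.sum_const, hcard, nsmul_eq_mul]; ring
  have hp : 0 ≤ ∏ i ∈ A, 1 / (i : ℝ) := Finset.prod_nonneg fun i _ => by positivity
  calc (∏ i ∈ A, 1 / (i : ℝ)) * ∑ i ∈ A, 1 / (i : ℝ)
      ≤ (∏ i ∈ A, 1 / (i : ℝ)) * ((d : ℝ) / t) := mul_le_mul_of_nonneg_left hsum hp
    _ = (d : ℝ) / t * ∏ i ∈ A, 1 / (i : ℝ) := mul_comm _ _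

lemma Sh_nonneg (t n : ℕ) : 0 ≤ Sh t n :=
  Finset.sum_nonneg fun i _ => by positivity

lemma fact_bound (t n : ℕ) : ∀ d : ℕ, (d.factorial : ℝ) * Aseq d t n ≤ Sh t n ^ d := by
  intro d
  induction d with
  | zero => simp [Aseq_zero]
  | succ d ih =>
    have hS0 := Sh_nonneg t n
    have hkey := key_rec d t n
    have hR0 := Rerr_nonneg d t n
    have hA0 := Aseq_nonneg d t n
    have hf0 : (0 : ℝ) ≤ (d.factorial : ℝ) := by positivity
    have h1 : ((d : ℝ) + 1) * Aseq (d + 1) t n ≤ Sh t n * Aseq d t n := by linarith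
    calc ((d + 1).factorial : ℝ) * Aseq (d + 1) t n
        = (d.factorial : ℝ) * (((d : ℝ) + 1) * Aseq (d + 1) t n) := by
          rw [Nat.factorial_succ]; push_cast; ring
      _ ≤ (d.factorial : ℝ) * (Sh t n * Aseq d t n) := by
          apply mul_le_mul_of_nonneg_left h1 hf0
      _ = Sh t n * ((d.factorial : ℝ) * Aseq d t n) := by ring
      _ ≤ Sh t n * Sh t n ^ d := mul_le_mul_of_nonneg_left ih hS0
      _ = Sh t n ^ (d + 1) := by rw [← pow_succ']

lemma main_aux (t n : ℕ) (ht : 1 ≤ t) (htn : t < n) :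
    ∀ d : ℕ, 1 ≤ d →
      |Aseq d t n - Real.log ((n : ℝ) / (t : ℝ)) ^ d / (d.factorial : ℝ)|
        ≤ 3 ^ d * Real.log ((n : ℝ) / (t : ℝ)) ^ (d - 1) / t := by
  have ht0 : (0 : ℝ) < t := by exact_mod_cast ht
  have hn0 : (0 : ℝ) < n := by exact_mod_cast (by omega : 0 < n)
  set L : ℝ := Real.log ((n : ℝ) / (t : ℝ)) with hL
  have hlog : L = Real.log (n : ℝ) - Real.log (t : ℝ) :=
    Real.log_div (ne_of_gt hn0) (ne_of_gt ht0)
  have hSL : Sh t n ≤ L := hlog ▸ Sh_le_log t n ht htn.le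
  have hLS : L ≤ Sh t n + 1 / t := hlog ▸ log_le_Sh t n ht htn
  have hS0 : 0 ≤ Sh t n := Sh_nonneg t n
  have hL0 : 0 ≤ L := le_trans hS0 hSL
  have hAle : ∀ d : ℕ, Aseq d t n ≤ L ^ d / (d.factorial : ℝ) := by
    intro d
    have hfd : (0 : ℝ) < (d.factorial : ℝ) := by
      exact_mod_cast d.factorial_pos
    rw [le_div_iff₀ hfd, mul_comm]
    exact le_trans (fact_bound t n d) (pow_le_pow_left₀ hS0 hSL d)
  intro d hd
  induction d, hd using Nat.le_induction with
  | base =>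
    rw [Aseq_one]
    have hgoal : |Sh t n - L| ≤ 3 / (t : ℝ) := by
      rw [abs_le]
      have h1 : (0 : ℝ) < 1 / t := one_div_pos.mpr ht0
      have h3 : (3 : ℝ) / t = 3 * (1 / t) := by ring
      constructor <;> nlinarith
    simpa [Nat.factorial_one] using hgoal
  | succ d hd IH =>
    have hkey := key_rec d t n
    have hR0 := Rerr_nonneg d t n
    have hRle := Rerr_le d t n ht
    have hA0 := Aseq_nonneg d t n
    have hAL := hAle d
    have hfd : (0 : ℝ) < (d.factorial : ℝ) := by exact_mod_cast d.factorial_pos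
    have hLd1 : L ^ (d - 1) * L = L ^ d := by
      rw [← pow_succ]
      congr 1
      omega
    -- the scaled difference
    have h2 : ((d : ℝ) + 1) * (L ^ (d + 1) / ((d + 1).factorial : ℝ))
        = L ^ (d + 1) / (d.factorial : ℝ) := by
      rw [Nat.factorial_succ]
      push_cast
      field_simp
    have h1 : ((d : ℝ) + 1) * (Aseq (d + 1) t n - L ^ (d + 1) / ((d + 1).factorial : ℝ))
        = Sh t n * Aseq d t n - Rerr d t n - L ^ (d + 1) / (d.factorial : ℝ) := by
      rw [mul_sub, h2]
      linarith
    -- bound the scaled difference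
    have hdecomp : Sh t n * Aseq d t n - Rerr d t n - L ^ (d + 1) / (d.factorial : ℝ)
        = Sh t n * (Aseq d t n - L ^ d / (d.factorial : ℝ))
          + (Sh t n - L) * (L ^ d / (d.factorial : ℝ)) + (-(Rerr d t n)) := by
      ring
    have habs : |Sh t n * Aseq d t n - Rerr d t n - L ^ (d + 1) / (d.factorial : ℝ)|
        ≤ Sh t n * |Aseq d t n - L ^ d / (d.factorial : ℝ)|
          + (L - Sh t n) * (L ^ d / (d.factorial : ℝ)) + Rerr d t n := by
      rw [hdecomp]
      have e1 := abs_add_three (Sh t n * (Aseq d t n - L ^ d / (d.factorial : ℝ)))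
        ((Sh t n - L) * (L ^ d / (d.factorial : ℝ))) (-(Rerr d t n))
      rw [abs_mul, abs_mul, abs_neg, abs_of_nonneg hS0,
        abs_of_nonpos (by linarith : Sh t n - L ≤ 0), neg_sub,
        abs_of_nonneg (by positivity : (0:ℝ) ≤ L ^ d / (d.factorial : ℝ)),
        abs_of_nonneg hR0] at e1
      exact e1
    -- bound each of the three terms
    have hb1 : Sh t n * |Aseq d t n - L ^ d / (d.factorial : ℝ)|
        ≤ 3 ^ d * L ^ d / t := by
      calc Sh t n * |Aseq d t n - L ^ d / (d.factorial : ℝ)|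
          ≤ L * (3 ^ d * L ^ (d - 1) / t) := by
            apply mul_le_mul hSL IH (abs_nonneg _) hL0
        _ = 3 ^ d * (L ^ (d - 1) * L) / t := by ring
        _ = 3 ^ d * L ^ d / t := by rw [hLd1]
    have hb2 : (L - Sh t n) * (L ^ d / (d.factorial : ℝ)) ≤ L ^ d / t := by
      have hf1 : (1 : ℝ) ≤ (d.factorial : ℝ) := by exact_mod_cast d.factorial_pos
      calc (L - Sh t n) * (L ^ d / (d.factorial : ℝ))
          ≤ (1 / t) * (L ^ d / 1) := by
            apply mul_le_mul (by linarith) (by gcongr) (by positivity) (by positivity)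
        _ = L ^ d / t := by ring
    have hb3 : Rerr d t n ≤ (d : ℝ) * L ^ d / t := by
      have hf1 : (1 : ℝ) ≤ (d.factorial : ℝ) := by exact_mod_cast d.factorial_pos
      calc Rerr d t n ≤ ((d : ℝ) / t) * Aseq d t n := hRle
        _ ≤ ((d : ℝ) / t) * (L ^ d / 1) := by
            apply mul_le_mul_of_nonneg_left _ (by positivity)
            refine le_trans hAL ?_
            gcongr
        _ = (d : ℝ) * L ^ d / t := by ring
    -- combine
    have hscaled : |Aseq (d + 1) t n - L ^ (d + 1) / ((d + 1).factorial : ℝ)|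
        ≤ (3 ^ d + 1 + (d : ℝ)) * L ^ d / t := by
      have hstep : |((d : ℝ) + 1) * (Aseq (d + 1) t n - L ^ (d + 1) / ((d + 1).factorial : ℝ))|
          ≤ (3 ^ d + 1 + (d : ℝ)) * L ^ d / t := by
        rw [h1]
        have hre : (3 ^ d + 1 + (d : ℝ)) * L ^ d / t
            = 3 ^ d * L ^ d / t + L ^ d / t + (d : ℝ) * L ^ d / t := by ring
        rw [hre]
        linarith [habs, hb1, hb2, hb3]
      have hge : |Aseq (d + 1) t n - L ^ (d + 1) / ((d + 1).factorial : ℝ)|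
          ≤ |((d : ℝ) + 1) * (Aseq (d + 1) t n - L ^ (d + 1) / ((d + 1).factorial : ℝ))| := by
        rw [abs_mul, abs_of_nonneg (by positivity : (0:ℝ) ≤ (d : ℝ) + 1)]
        refine le_mul_of_one_le_left (abs_nonneg _) ?_
        have : (0 : ℝ) ≤ (d : ℝ) := Nat.cast_nonneg d
        linarith
      exact le_trans hge hstep
    have hconst : (3 : ℝ) ^ d + 1 + (d : ℝ) ≤ 3 ^ (d + 1) := by
      have hd3 : (d : ℝ) ≤ 3 ^ d := by
        exact_mod_cast (Nat.lt_pow_self (by norm_num : 1 < 3) : d < 3 ^ d).le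
      have h13 : (1 : ℝ) ≤ 3 ^ d := one_le_pow₀ (by norm_num : (1:ℝ) ≤ 3)
      rw [pow_succ]
      nlinarith
    have hfin : (3 ^ d + 1 + (d : ℝ)) * L ^ d / t ≤ 3 ^ (d + 1) * L ^ d / t := by
      gcongr
    refine le_trans hscaled (le_trans hfin ?_)
    have : (d + 1) - 1 = d := by omega
    rw [this]

theorem stmt15 (d : ℕ) (hd : 1 ≤ d) :
    ∃ C : ℝ, 0 < C ∧ ∀ t n : ℕ, 1 ≤ t → t < n →
      |Aseq d t n - (1 / (Nat.factorial d : ℝ)) * Real.log ((n : ℝ) / (t : ℝ)) ^ d|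
        ≤ C * Real.log ((n : ℝ) / (t : ℝ)) ^ (d - 1) / (t : ℝ) := by
  refine ⟨3 ^ d, by positivity, fun t n ht htn => ?_⟩
  have h := main_aux t n ht htn d hd
  have heq : (1 / (Nat.factorial d : ℝ)) * Real.log ((n : ℝ) / (t : ℝ)) ^ d
      = Real.log ((n : ℝ) / (t : ℝ)) ^ d / (Nat.factorial d : ℝ) := by ring
  rw [heq]
  exact h
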